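/- (Model 2c3b4a) Define vector fields on ℝ⁴ (coordinates (x,y,u,v)) by e₁ = ∂x + y∂u, e₂ = −3y∂x + ∂y + x∂u, e₃ = 2x∂x + y∂y + 3u∂u, and let S = {(x, y, xy + y³, 0) : (x,y) ∈ ℝ²}. Then: (i) each of e₁, e₂, e₃ is tangent to S; (ii) at every point of S the first two components of e₁ and e₂, namely (1, 0) and (−3y, 1), are linearly independent, so S is affinely homogeneous; (iii) with bracket [X,Y](p) = (DY)(p)(X(p)) − (DX)(p)(Y(p)) one has [e₁,e₂] = 0, [e₁,e₃] = 2·e₁, [e₂,e₃] = e₂. -/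

import Mathlib

namespace Model2c3b4a

/-- Lie bracket of vector fields on `ℝ⁴`, `[X,Y](p) = DY(p)(X(p)) − DX(p)(Y(p))`. -/
noncomputable def lieBracket (X Y : (Fin 4 → ℝ) → Fin 4 → ℝ) :
    (Fin 4 → ℝ) → Fin 4 → ℝ :=
  fun p => fderiv ℝ Y p (X p) - fderiv ℝ X p (Y p)

/-- Tangency of a vector field `X` on `ℝ⁴ ∋ (x,y,u,v)` to the graph
`S = {(x, y, F(x,y), G(x,y))}`. -/
def TangentToGraph (F G : ℝ × ℝ → ℝ) (X : (Fin 4 → ℝ) → Fin 4 → ℝ) : Prop :=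
  ∀ p : ℝ × ℝ,
    X ![p.1, p.2, F p, G p] 2
        = fderiv ℝ F p (1, 0) * X ![p.1, p.2, F p, G p] 0
          + fderiv ℝ F p (0, 1) * X ![p.1, p.2, F p, G p] 1 ∧
    X ![p.1, p.2, F p, G p] 3
        = fderiv ℝ G p (1, 0) * X ![p.1, p.2, F p, G p] 0
          + fderiv ℝ G p (0, 1) * X ![p.1, p.2, F p, G p] 1

/-- `u = xy + y³`. -/
noncomputable def F : ℝ × ℝ → ℝ := fun p => p.1 * p.2 + p.2 ^ 3
/-- `v = 0`. -/
noncomputable def G : ℝ × ℝ → ℝ := fun _ => 0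

/-- `e₁ = ∂x + y∂u`. -/
noncomputable def e₁ : (Fin 4 → ℝ) → Fin 4 → ℝ := fun p => ![1, 0, p 1, 0]
/-- `e₂ = −3y∂x + ∂y + x∂u`. -/
noncomputable def e₂ : (Fin 4 → ℝ) → Fin 4 → ℝ := fun p => ![-3 * p 1, 1, p 0, 0]
/-- `e₃ = 2x∂x + y∂y + 3u∂u`. -/
noncomputable def e₃ : (Fin 4 → ℝ) → Fin 4 → ℝ :=
  fun p => ![2 * p 0, p 1, 3 * p 2, 0]

lemma hasFDerivF (p : ℝ × ℝ) :
    HasFDerivAt F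
      ((p.2 • ContinuousLinearMap.fst ℝ ℝ ℝ) +
        ((p.1 + 3 * p.2 ^ 2) • ContinuousLinearMap.snd ℝ ℝ ℝ)) p := by
  have h1 : HasFDerivAt (fun q : ℝ × ℝ => q.1) (ContinuousLinearMap.fst ℝ ℝ ℝ) p :=
    hasFDerivAt_fst
  have h2 : HasFDerivAt (fun q : ℝ × ℝ => q.2) (ContinuousLinearMap.snd ℝ ℝ ℝ) p :=
    hasFDerivAt_snd
  have h := (h1.mul h2).add ((h2.mul h2).mul h2)
  have hFe : F = fun q : ℝ × ℝ => q.1 * q.2 + q.2 * q.2 * q.2 := by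
    funext q; simp [F]; ring
  rw [hFe]
  convert h using 1
  all_goals ext v <;> simp <;> ring

lemma fderivF_x (p : ℝ × ℝ) : fderiv ℝ F p (1, 0) = p.2 := by
  rw [(hasFDerivF p).fderiv]; simp

lemma fderivF_y (p : ℝ × ℝ) : fderiv ℝ F p (0, 1) = p.1 + 3 * p.2 ^ 2 := by
  rw [(hasFDerivF p).fderiv]; simp

lemma fderivG (p : ℝ × ℝ) : fderiv ℝ G p = 0 := by
  rw [show G = fun _ : ℝ × ℝ => (0:ℝ) from rfl]
  exact fderiv_const_apply (𝕜 := ℝ) (0 : ℝ)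

noncomputable def L₁ : (Fin 4 → ℝ) →L[ℝ] (Fin 4 → ℝ) :=
  (Matrix.toLin' !![0,0,0,0; 0,0,0,0; 0,1,0,0; 0,0,0,0]).toContinuousLinearMap
noncomputable def L₂ : (Fin 4 → ℝ) →L[ℝ] (Fin 4 → ℝ) :=
  (Matrix.toLin' !![0,-3,0,0; 0,0,0,0; 1,0,0,0; 0,0,0,0]).toContinuousLinearMap
noncomputable def L₃ : (Fin 4 → ℝ) →L[ℝ] (Fin 4 → ℝ) :=
  (Matrix.toLin' !![2,0,0,0; 0,1,0,0; 0,0,3,0; 0,0,0,0]).toContinuousLinearMap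

lemma L₁_apply (v : Fin 4 → ℝ) : L₁ v = ![0, 0, v 1, 0] := by
  funext i
  fin_cases i <;>
    simp [L₁, Matrix.toLin'_apply, Matrix.mulVec, dotProduct, Fin.sum_univ_four]

lemma L₂_apply (v : Fin 4 → ℝ) : L₂ v = ![-3 * v 1, 0, v 0, 0] := by
  funext i
  fin_cases i <;>
    simp [L₂, Matrix.toLin'_apply, Matrix.mulVec, dotProduct, Fin.sum_univ_four]

lemma L₃_apply (v : Fin 4 → ℝ) : L₃ v = ![2 * v 0, v 1, 3 * v 2, 0] := by
  funext i
  fin_cases i <;>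
    simp [L₃, Matrix.toLin'_apply, Matrix.mulVec, dotProduct, Fin.sum_univ_four]

lemma fderiv_e₁ (p : Fin 4 → ℝ) : fderiv ℝ e₁ p = L₁ := by
  have : HasFDerivAt e₁ L₁ p := by
    have h : e₁ = fun q => ![1,0,0,0] + L₁ q := by
      funext q i
      fin_cases i <;> simp [e₁, L₁_apply]
    have base : HasFDerivAt (fun q : Fin 4 → ℝ => ![(1:ℝ),0,0,0] + L₁ q) (0 + L₁) p :=
      (hasFDerivAt_const _ _).add L₁.hasFDerivAt
    rw [h]; simpa using base
  exact this.fderiv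

lemma fderiv_e₂ (p : Fin 4 → ℝ) : fderiv ℝ e₂ p = L₂ := by
  have : HasFDerivAt e₂ L₂ p := by
    have h : e₂ = fun q => ![0,1,0,0] + L₂ q := by
      funext q i
      fin_cases i <;> simp [e₂, L₂_apply]
    have base : HasFDerivAt (fun q : Fin 4 → ℝ => ![(0:ℝ),1,0,0] + L₂ q) (0 + L₂) p :=
      (hasFDerivAt_const _ _).add L₂.hasFDerivAt
    rw [h]; simpa using base
  exact this.fderiv

lemma fderiv_e₃ (p : Fin 4 → ℝ) : fderiv ℝ e₃ p = L₃ := by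
  have : HasFDerivAt e₃ L₃ p := by
    have h : e₃ = fun q => L₃ q := by
      funext q i
      fin_cases i <;> simp [e₃, L₃_apply]
    rw [h]
    exact L₃.hasFDerivAt
  exact this.fderiv

/-- **Model 2c3b4a:** the surface `{u = xy + y³, v = 0}` is affinely homogeneous, with
tangent vector fields `e₁, e₂, e₃` satisfying `[e₁,e₂] = 0`, `[e₁,e₃] = 2e₁`,
`[e₂,e₃] = e₂`. -/
theorem model_2c3b4a :
    (TangentToGraph F G e₁ ∧ TangentToGraph F G e₂ ∧ TangentToGraph F G e₃) ∧
    (∀ p : ℝ × ℝ,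
      e₁ ![p.1, p.2, F p, G p] 0 = 1 ∧ e₁ ![p.1, p.2, F p, G p] 1 = 0 ∧
      e₂ ![p.1, p.2, F p, G p] 0 = -3 * p.2 ∧ e₂ ![p.1, p.2, F p, G p] 1 = 1 ∧
      LinearIndependent ℝ
        ![((e₁ ![p.1, p.2, F p, G p] 0, e₁ ![p.1, p.2, F p, G p] 1) : ℝ × ℝ),
          ((e₂ ![p.1, p.2, F p, G p] 0, e₂ ![p.1, p.2, F p, G p] 1) : ℝ × ℝ)]) ∧
    (lieBracket e₁ e₂ = 0 ∧ lieBracket e₁ e₃ = (2 : ℝ) • e₁ ∧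
      lieBracket e₂ e₃ = e₂) := by
  refine ⟨⟨?_, ?_, ?_⟩, ?_, ?_, ?_, ?_⟩
  · intro p
    constructor
    · simp [e₁, fderivF_x, fderivF_y]
    · simp [e₁, fderivG]
  · intro p
    constructor
    · simp [e₂, fderivF_x, fderivF_y]; ring
    · simp [e₂, fderivG]
  · intro p
    constructor
    · simp [e₃, fderivF_x, fderivF_y, F]; ring
    · simp [e₃, fderivG]
  · intro p
    refine ⟨by simp [e₁], by simp [e₁], by simp [e₂], by simp [e₂], ?_⟩
    rw [LinearIndependent.pair_iff]
    · intro s t hst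
      simp [e₁, e₂, Prod.ext_iff] at hst
      obtain ⟨h1, h2⟩ := hst
      subst h2
      simp at h1
      exact ⟨h1, rfl⟩
  · funext p
    funext i
    simp only [lieBracket, fderiv_e₁, fderiv_e₂, Pi.sub_apply, L₁_apply, L₂_apply, e₁, e₂]
    fin_cases i <;> simp
  · funext p
    funext i
    simp only [lieBracket, fderiv_e₁, fderiv_e₃, Pi.sub_apply, L₁_apply, L₃_apply, e₁, e₃,
      Pi.smul_apply]
    fin_cases i <;> simp <;> ring
  · funext p
    funext i
    simp only [lieBracket, fderiv_e₂, fderiv_e₃, Pi.sub_apply, L₂_apply, L₃_apply, e₂, e₃]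
    fin_cases i <;> simp <;> ring

end Model2c3b4a
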